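/- arXiv:2301.08328 — 3 statements merged into one kernel-verified Lean document; each statement's English description precedes it below -/
import Mathlib

section
/- For the simple random walk with up-probability p started at 0, let T_0 be the first return time to 0 (after time 0) and T^{|k|} the first hitting time of {+k, -k}. Then P(T_0 < T^{|k|}) is strictly increasing in p on [0, 1/2] and strictly decreasing in p on [1/2, 1]. -/
open scoped Classical
noncomputable section

def walkPos {n : ℕ} (x : Fin n → Bool) (m : ℕ) : ℤ :=
  ∑ i : Fin n, if (i : ℕ) < m then (if x i then (1 : ℤ) else -1) else 0

def walkWt {n : ℕ} (p : ℝ) (x : Fin n → Bool) : ℝ :=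
  ∏ i : Fin n, if x i then p else 1 - p

/-- `P(T_0 < T^{|k|})`: the probability that the walk started at 0 returns to 0
(after time 0) before hitting `+k` or `-k`.  It is the sum over all `n` of the
probabilities of paths of length `n` that end at 0, do not visit 0 at any
intermediate time `0 < m < n`, and stay strictly inside `(-k, k)` before time `n`. -/
def retProb (p : ℝ) (k : ℕ) : ℝ :=
  ∑' n : ℕ, ∑ x : Fin n → Bool,
    if (0 < n ∧ walkPos x n = 0 ∧
        ∀ m, 0 < m → m < n → walkPos x m ≠ 0 ∧ |walkPos x m| < (k : ℤ))
    then walkWt p x else 0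

lemma walkPos_eq_sum_range {n : ℕ} (x : Fin n → Bool) {m : ℕ} (hm : m ≤ n) :
    walkPos x m =
      ∑ i ∈ Finset.range m, (if h : i < n then (if x ⟨i, h⟩ then (1 : ℤ) else -1) else 0) := by
  have h1 : walkPos x m = ∑ i ∈ Finset.range n,
      (if h : i < n then (if i < m then (if x ⟨i, h⟩ then (1 : ℤ) else -1) else 0) else 0) := by
    rw [← Fin.sum_univ_eq_sum_range]
    exact Finset.sum_congr rfl fun i _ => by rw [dif_pos i.isLt]
  rw [h1, ← Finset.sum_subset (Finset.range_subset_range.mpr hm)]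
  · exact Finset.sum_congr rfl fun i hi => by
      have : i < m := Finset.mem_range.mp hi
      rw [dif_pos (this.trans_le hm), dif_pos (this.trans_le hm), if_pos this]
  · intro i _ hi
    have : ¬ i < m := fun h => hi (Finset.mem_range.mpr h)
    simp [this]

def restrict {N : ℕ} (n : ℕ) (y : Fin N → Bool) : Fin n → Bool :=
  fun i => if h : (i : ℕ) < N then y ⟨i, h⟩ else false

lemma restrict_self {N : ℕ} (y : Fin N → Bool) : restrict N y = y := by
  funext i; rw [restrict, dif_pos i.isLt]

lemma walkPos_restrict {n N : ℕ} (hn : n ≤ N) (y : Fin N → Bool) {m : ℕ} (hm : m ≤ n) :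
    walkPos (restrict n y) m = walkPos y m := by
  rw [walkPos_eq_sum_range _ hm, walkPos_eq_sum_range _ (hm.trans hn)]
  refine Finset.sum_congr rfl fun i hi => ?_
  have him : i < m := Finset.mem_range.mp hi
  rw [dif_pos (him.trans_le hm), dif_pos (him.trans_le (hm.trans hn))]
  rw [restrict, dif_pos (him.trans_le (hm.trans hn))]

lemma restrict_snoc {N : ℕ} (n : ℕ) (hn : n ≤ N) (z : Fin N → Bool) (b : Bool) :
    restrict n (Fin.snoc z b : Fin (N + 1) → Bool) = restrict n z := by
  funext i
  have hiN : (i : ℕ) < N := i.isLt.trans_le hn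
  rw [restrict, restrict, dif_pos (hiN.trans (Nat.lt_succ_self N)), dif_pos hiN]
  have : (⟨(i : ℕ), hiN.trans (Nat.lt_succ_self N)⟩ : Fin (N + 1)) =
      Fin.castSucc ⟨(i : ℕ), hiN⟩ := rfl
  rw [this, Fin.snoc_castSucc]


def Cond (k n : ℕ) (x : Fin n → Bool) : Prop :=
  0 < n ∧ walkPos x n = 0 ∧
    ∀ m, 0 < m → m < n → walkPos x m ≠ 0 ∧ |walkPos x m| < (k : ℤ)

def S (p : ℝ) (k n : ℕ) : ℝ :=
  ∑ x : Fin n → Bool, if Cond k n x then walkWt p x else 0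

lemma sum_snoc_decomp {N : ℕ} (f : (Fin (N + 1) → Bool) → ℝ) :
    ∑ y : Fin (N + 1) → Bool, f y = ∑ z : Fin N → Bool, ∑ b : Bool, f (Fin.snoc z b) := by
  rw [← (Fin.snocEquiv (fun _ => Bool)).sum_comp f, Fintype.sum_prod_type, Finset.sum_comm]
  exact Finset.sum_congr rfl fun z _ => Finset.sum_congr rfl fun b _ => by
    simp [Fin.snocEquiv]

lemma walkWt_snoc {N : ℕ} (p : ℝ) (z : Fin N → Bool) (b : Bool) :
    walkWt p (Fin.snoc z b : Fin (N + 1) → Bool) = walkWt p z * (if b then p else 1 - p) := by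
  rw [walkWt, Fin.prod_univ_castSucc]
  simp only [Fin.snoc_castSucc, Fin.snoc_last]
  rfl

lemma S_eq_extended (p : ℝ) (k n : ℕ) :
    ∀ N, n ≤ N →
      S p k n = ∑ y : Fin N → Bool, if Cond k n (restrict n y) then walkWt p y else 0 := by
  intro N hN
  induction N, hN using Nat.le_induction with
  | base =>
    rw [S]
    exact Finset.sum_congr rfl fun x _ => by rw [restrict_self]
  | succ N hN ih =>
    rw [ih, sum_snoc_decomp]
    refine Finset.sum_congr rfl fun z _ => ?_
    have hres : ∀ b : Bool, restrict n (Fin.snoc z b : Fin (N+1) → Bool) = restrict n z :=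
      fun b => restrict_snoc n hN z b
    rw [Fintype.sum_bool, hres, hres, walkWt_snoc, walkWt_snoc]
    by_cases h : Cond k n (restrict n z)
    · rw [if_pos h, if_pos h, if_pos h]; simp; ring
    · rw [if_neg h, if_neg h, if_neg h]; ring

lemma walkWt_nonneg {n : ℕ} {p : ℝ} (hp0 : 0 ≤ p) (hp1 : p ≤ 1) (x : Fin n → Bool) :
    0 ≤ walkWt p x := by
  refine Finset.prod_nonneg fun i _ => ?_
  split <;> linarith

lemma walkWt_total {N : ℕ} (p : ℝ) : ∑ y : Fin N → Bool, walkWt p y = 1 := by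
  induction N with
  | zero => simp [walkWt]
  | succ N ih =>
    rw [sum_snoc_decomp]
    have : ∀ z : Fin N → Bool, ∑ b : Bool, walkWt p (Fin.snoc z b : Fin (N+1) → Bool)
        = walkWt p z := by
      intro z
      rw [Fintype.sum_bool, walkWt_snoc, walkWt_snoc]
      simp only [if_true, if_pos rfl, Bool.false_eq_true, if_false, if_neg]
      ring
    rw [Finset.sum_congr rfl fun z _ => this z, ih]

lemma cond_unique {k N : ℕ} (y : Fin N → Bool) {n n' : ℕ} (hn : n ≤ N) (hn' : n' ≤ N)
    (h1 : Cond k n (restrict n y)) (h2 : Cond k n' (restrict n' y)) : n = n' := by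
  by_contra hne
  wlog hlt : n < n' generalizing n n'
  · exact this hn' hn h2 h1 (Ne.symm hne) (by omega)
  have e1 : walkPos y n = 0 := by
    rw [← walkPos_restrict hn y le_rfl]; exact h1.2.1
  have e2 : walkPos y n ≠ 0 := by
    rw [← walkPos_restrict hn' y hlt.le]
    exact (h2.2.2 n h1.1 hlt).1
  exact e2 e1

lemma partial_le_one {p : ℝ} (hp0 : 0 ≤ p) (hp1 : p ≤ 1) (k N : ℕ) :
    ∑ n ∈ Finset.range N, S p k n ≤ 1 := by
  have hext : ∀ n ∈ Finset.range N,
      S p k n = ∑ y : Fin N → Bool, if Cond k n (restrict n y) then walkWt p y else 0 :=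
    fun n hn => S_eq_extended p k n N (Finset.mem_range.mp hn).le
  rw [Finset.sum_congr rfl hext, Finset.sum_comm]
  calc ∑ y : Fin N → Bool, ∑ n ∈ Finset.range N,
        (if Cond k n (restrict n y) then walkWt p y else 0)
      ≤ ∑ y : Fin N → Bool, walkWt p y := by
        refine Finset.sum_le_sum fun y _ => ?_
        rw [← Finset.sum_filter]
        rw [Finset.sum_const, nsmul_eq_mul]
        have hcard : ((Finset.range N).filter (fun n => Cond k n (restrict n y))).card ≤ 1 := by
          refine Finset.card_le_one.mpr fun a ha b hb => ?_
          simp only [Finset.mem_filter, Finset.mem_range] at ha hb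
          exact cond_unique y ha.1.le hb.1.le ha.2 hb.2
        have hw : 0 ≤ walkWt p y := walkWt_nonneg hp0 hp1 y
        calc (((Finset.range N).filter (fun n => Cond k n (restrict n y))).card : ℝ) * walkWt p y
            ≤ 1 * walkWt p y := by
              refine mul_le_mul_of_nonneg_right ?_ hw
              exact_mod_cast hcard
          _ = walkWt p y := one_mul _
    _ = 1 := walkWt_total p

lemma walkWt_balanced {n : ℕ} (p : ℝ) (x : Fin n → Bool) (hx : walkPos x n = 0) :
    walkWt p x = (p * (1 - p)) ^ (Finset.univ.filter (fun i => x i = true)).card := by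
  set u := (Finset.univ.filter (fun i => x i = true)).card with hu
  set v := (Finset.univ.filter (fun i => ¬ x i = true)).card with hv
  have h1 : walkWt p x = p ^ u * (1 - p) ^ v := by
    rw [walkWt, Finset.prod_ite, Finset.prod_const, Finset.prod_const]
  have h2 : walkPos x n = (u : ℤ) - v := by
    rw [walkPos]
    have hstep : ∀ i : Fin n, (if (i : ℕ) < n then (if x i then (1 : ℤ) else -1) else 0)
        = if x i then (1 : ℤ) else -1 := fun i => if_pos i.isLt
    rw [Finset.sum_congr rfl fun i _ => hstep i, Finset.sum_ite, Finset.sum_const,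
      Finset.sum_const]
    ring
  have huv : (u : ℤ) = v := by rw [h2] at hx; omega
  have huv' : u = v := by exact_mod_cast huv
  rw [h1, ← huv', mul_pow]

lemma S_nonneg {p : ℝ} (hp0 : 0 ≤ p) (hp1 : p ≤ 1) (k n : ℕ) : 0 ≤ S p k n := by
  refine Finset.sum_nonneg fun x _ => ?_
  split
  · exact walkWt_nonneg hp0 hp1 x
  · exact le_refl 0

lemma S_le_S {p q : ℝ} (h0 : 0 ≤ p * (1 - p)) (h : p * (1 - p) ≤ q * (1 - q)) (k n : ℕ) :
    S p k n ≤ S q k n := by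
  refine Finset.sum_le_sum fun x _ => ?_
  by_cases hc : Cond k n x
  · rw [if_pos hc, if_pos hc, walkWt_balanced p x hc.2.1, walkWt_balanced q x hc.2.1]
    exact pow_le_pow_left₀ h0 h _
  · rw [if_neg hc, if_neg hc]

lemma S_two {p : ℝ} (k : ℕ) (hk : 2 ≤ k) : S p k 2 = 2 * (p * (1 - p)) := by
  rw [S, ← (finTwoArrowEquiv Bool).symm.sum_comp
    (fun x => if Cond k 2 x then walkWt p x else 0), Fintype.sum_prod_type]
  have hval : ∀ a b : Bool, ∀ m : ℕ, walkPos (![a, b] : Fin 2 → Bool) m =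
      (if 0 < m then (if a then (1:ℤ) else -1) else 0) +
      (if 1 < m then (if b then (1:ℤ) else -1) else 0) := by
    intro a b m
    rw [walkPos, Fin.sum_univ_two]
    rfl
  have hwt : ∀ a b : Bool, walkWt p (![a, b] : Fin 2 → Bool) =
      (if a then p else 1 - p) * (if b then p else 1 - p) := by
    intro a b
    rw [walkWt, Fin.prod_univ_two]
    rfl
  have hcondTF : ∀ a b : Bool, a ≠ b → Cond k 2 (![a, b] : Fin 2 → Bool) := by
    intro a b hab
    refine ⟨by norm_num, ?_, ?_⟩
    · rw [hval]; cases a <;> cases b <;> simp_all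
    · intro m hm0 hm2
      have hm : m = 1 := by omega
      subst hm
      rw [hval]
      have hk' : (1 : ℤ) < (k : ℤ) := by exact_mod_cast by omega
      cases a <;> cases b <;> simp_all <;> omega
  have hcondEq : ∀ a : Bool, ¬ Cond k 2 (![a, a] : Fin 2 → Bool) := by
    intro a hc
    have := hc.2.1
    rw [hval] at this
    cases a <;> simp_all
  rw [Fintype.sum_bool]
  simp only [Fintype.sum_bool, finTwoArrowEquiv_symm_apply]
  rw [if_neg (hcondEq true), if_pos (hcondTF true false (by simp)),
    if_pos (hcondTF false true (by simp)), if_neg (hcondEq false), hwt, hwt]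
  simp only [if_true, if_pos rfl, Bool.false_eq_true, if_false, if_neg]
  ring


lemma retProb_eq (p : ℝ) (k : ℕ) : retProb p k = ∑' n, S p k n := by
  unfold retProb S Cond
  exact tsum_congr fun n => Finset.sum_congr rfl fun x _ => by convert rfl

lemma summable_S {q : ℝ} (hq0 : 0 ≤ q) (hq1 : q ≤ 1) (k : ℕ) : Summable (S q k) :=
  summable_of_sum_range_le (fun n => S_nonneg hq0 hq1 k n) (fun N => partial_le_one hq0 hq1 k N)

lemma retProb_lt {p q : ℝ} (hp0 : 0 ≤ p) (hp1 : p ≤ 1) (hq0 : 0 ≤ q) (hq1 : q ≤ 1)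
    (hpq : p * (1 - p) < q * (1 - q)) (k : ℕ) (hk : 2 ≤ k) : retProb p k < retProb q k := by
  rw [retProb_eq, retProb_eq]
  refine Summable.tsum_lt_tsum_of_nonneg (i := 2) (fun n => S_nonneg hp0 hp1 k n)
    (fun n => S_le_S (mul_nonneg hp0 (by linarith)) hpq.le k n) ?_ (summable_S hq0 hq1 k)
  rw [S_two k hk, S_two k hk]
  linarith

/-- `P(T_0 < T^{|k|})` is strictly increasing in `p` on `[0, 1/2]` and strictly
decreasing in `p` on `[1/2, 1]`. -/
theorem retProb_strictMono (k : ℕ) (hk : 2 ≤ k) :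
    (∀ p q : ℝ, 0 ≤ p → p < q → q ≤ 1 / 2 → retProb p k < retProb q k) ∧
    (∀ p q : ℝ, 1 / 2 ≤ p → p < q → q ≤ 1 → retProb q k < retProb p k) := by
  constructor
  · intro p q hp0 hpq hq2
    refine retProb_lt hp0 (by linarith) (by linarith) (by linarith) ?_ k hk
    nlinarith
  · intro p q hp2 hpq hq1
    refine retProb_lt (by linarith) hq1 (by linarith) (by linarith) ?_ k hk
    nlinarith
end
end

section
/- Fix j ≥ 0 and 0 < y < k. Conditioned on the simple random walk started at 0 not having hit ±k by time t and being at ±y at time t, the probability of being at +y is p^y / (p^y + (1-p)^y), independently of t. Equivalently, the event {S_t = +y} is conditionally independent of t given {S_t ∈ {+y, -y}, max_{s≤t} |S_s| < k}. -/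
open scoped Classical
noncomputable section

/-- `P(S_t = e, max_{s ≤ t} |S_s| < k)`. -/
def insideAt (p : ℝ) (k t : ℕ) (e : ℤ) : ℝ :=
  ∑ x : Fin t → Bool,
    if (walkPos x t = e ∧ ∀ m ≤ t, |walkPos x m| < (k : ℤ)) then walkWt p x else 0

lemma walkPos_flip {n : ℕ} (x : Fin n → Bool) (m : ℕ) :
    walkPos (fun i => !x i) m = -walkPos x m := by
  unfold walkPos
  rw [← Finset.sum_neg_distrib]
  refine Finset.sum_congr rfl fun i _ => ?_
  by_cases h : (i : ℕ) < m <;> cases hx : x i <;> simp [h, hx]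

lemma card_filter_not {t : ℕ} (x : Fin t → Bool) :
    (Finset.univ.filter fun i => ¬ x i = true).card
      = t - (Finset.univ.filter fun i => x i = true).card := by
  have h := Finset.card_filter_add_card_filter_not
    (s := (Finset.univ : Finset (Fin t))) (p := fun i => x i = true)
  simp only [Finset.card_univ, Fintype.card_fin] at h
  omega

lemma walkWt_eq {t : ℕ} (p : ℝ) (x : Fin t → Bool) :
    walkWt p x = p ^ (Finset.univ.filter fun i => x i = true).card *
      (1 - p) ^ (t - (Finset.univ.filter fun i => x i = true).card) := by
  classical
  unfold walkWt
  rw [Finset.prod_ite, Finset.prod_const, Finset.prod_const, card_filter_not]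

lemma walkPos_total {t : ℕ} (x : Fin t → Bool) :
    walkPos x t = 2 * ((Finset.univ.filter fun i => x i = true).card : ℤ) - t := by
  classical
  unfold walkPos
  have hthis : ∀ i : Fin t, (if (i : ℕ) < t then (if x i then (1 : ℤ) else -1) else 0)
      = (if x i then (1 : ℤ) else -1) := fun i => by simp [i.isLt]
  simp only [hthis]
  rw [Finset.sum_ite, Finset.sum_const, Finset.sum_const, card_filter_not]
  have h3 : (Finset.univ.filter fun i => x i = true).card ≤ t :=
    (Finset.card_filter_le _ _).trans (by simp)
  simp only [nsmul_eq_mul, mul_one, mul_neg_one]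
  push_cast [h3]
  ring

lemma weight_flip {t : ℕ} (p : ℝ) (y : ℕ) (x : Fin t → Bool) (h : walkPos x t = (y : ℤ)) :
    p ^ y * walkWt p (fun i => !x i) = (1 - p) ^ y * walkWt p x := by
  classical
  set a := (Finset.univ.filter fun i => x i = true).card with ha
  have hat : a ≤ t := by
    rw [ha]; exact (Finset.card_filter_le _ _).trans (by simp)
  have htot := walkPos_total x
  rw [h, ← ha] at htot
  have hca : (Finset.univ.filter fun i => (!x i) = true).card = t - a := by
    have h2 : (Finset.univ.filter fun i => (!x i) = true)
        = (Finset.univ.filter fun i => ¬ x i = true) := by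
      apply Finset.filter_congr; intro i _; simp
    rw [h2, card_filter_not, ← ha]
  have hya : y + (t - a) = a := by omega
  have htta : t - (t - a) = a := by omega
  rw [walkWt_eq, walkWt_eq, hca, ← ha, htta]
  have e1 : p ^ y * (p ^ (t - a) * (1 - p) ^ a) = p ^ (y + (t - a)) * (1 - p) ^ a := by
    rw [pow_add]; ring
  have e2 : (1 - p) ^ y * (p ^ a * (1 - p) ^ (t - a))
      = p ^ a * (1 - p) ^ (y + (t - a)) := by
    rw [pow_add]; ring
  rw [e1, e2, hya]

/-- Conditioned on not having hit `±k` by time `t` and being at `±y` at time `t`,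
the probability of being at `+y` is `p^y / (p^y + (1-p)^y)`, independently of `t`. -/
theorem conditional_position_prob (p : ℝ) (hp : 0 < p) (hp1 : p < 1)
    (k y : ℕ) (hy : 0 < y) (hyk : y < k) (t : ℕ) (hpar : t % 2 = y % 2) :
    insideAt p k t (y : ℤ) =
      p ^ y / (p ^ y + (1 - p) ^ y) * (insideAt p k t (y : ℤ) + insideAt p k t (-(y : ℤ))) := by
  have hbij : Function.Bijective (fun (x : Fin t → Bool) i => !x i) := by
    apply Function.Involutive.bijective
    intro x; funext i; simp
  have key : p ^ y * insideAt p k t (-(y : ℤ)) = (1 - p) ^ y * insideAt p k t (y : ℤ) := by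
    unfold insideAt
    rw [Finset.mul_sum, Finset.mul_sum]
    symm
    refine Fintype.sum_bijective _ hbij _ _ fun x => ?_
    by_cases hc : walkPos x t = (y : ℤ) ∧ ∀ m ≤ t, |walkPos x m| < (k : ℤ)
    · have hc' : walkPos (fun i => !x i) t = -(y : ℤ) ∧
          ∀ m ≤ t, |walkPos (fun i => !x i) m| < (k : ℤ) := by
        constructor
        · rw [walkPos_flip, hc.1]
        · intro m hm; rw [walkPos_flip, abs_neg]; exact hc.2 m hm
      rw [if_pos hc, if_pos hc', weight_flip p y x hc.1]
    · have hc' : ¬ (walkPos (fun i => !x i) t = -(y : ℤ) ∧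
          ∀ m ≤ t, |walkPos (fun i => !x i) m| < (k : ℤ)) := by
        intro hcontra
        apply hc
        refine ⟨?_, fun m hm => ?_⟩
        · have := hcontra.1; rw [walkPos_flip] at this; linarith [this]
        · have := hcontra.2 m hm; rwa [walkPos_flip, abs_neg] at this
      rw [if_neg hc, if_neg hc', mul_zero, mul_zero]
  have hq : (0 : ℝ) < 1 - p := by linarith
  have hden : p ^ y + (1 - p) ^ y ≠ 0 := by positivity
  field_simp
  linarith [key]
end
end

section
/- For k even, the exit time T^{|k|}(p) of the simple random walk from (-k,k) satisfies the distributional identity T^{|k|}(p) = Σ_{i=1}^{N} (T_i^{|k/2|} + T̃_i^{|k/2|}), where T_i^{|k/2|} and T̃_i^{|k/2|} are i.i.d. copies of T^{|k/2|}(p), independent of N, and N is geometric with success probability (π_{k/2}^+(p))^2 + (1 - π_{k/2}^+(p))^2, where π_m^+(p) = p^m/(p^m+(1-p)^m). -/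
open scoped Classical
noncomputable section

lemma walkPos_zero {n : ℕ} (x : Fin n → Bool) : walkPos x 0 = 0 := by
  simp [walkPos]

lemma walkPos_succ {n : ℕ} (x : Fin n → Bool) (j : ℕ) (hj : j < n) :
    walkPos x (j + 1) = walkPos x j + (if x ⟨j, hj⟩ then (1 : ℤ) else -1) := by
  unfold walkPos
  have key : ∀ i : Fin n, (if (i : ℕ) < j + 1 then (if x i then (1:ℤ) else -1) else 0)
      = (if (i : ℕ) < j then (if x i then (1:ℤ) else -1) else 0)
        + (if i = (⟨j, hj⟩ : Fin n) then (if x i then (1:ℤ) else -1) else 0) := by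
    intro i
    by_cases h : i = (⟨j, hj⟩ : Fin n)
    · subst h
      simp
    · have hij : (i : ℕ) ≠ j := fun hc => h (Fin.ext hc)
      rw [if_neg h, add_zero]
      by_cases h2 : (i : ℕ) < j
      · rw [if_pos (by omega), if_pos h2]
      · rw [if_neg (by omega), if_neg h2]
  rw [Finset.sum_congr rfl (fun i _ => key i), Finset.sum_add_distrib,
    Finset.sum_ite_eq' Finset.univ (⟨j, hj⟩ : Fin n), if_pos (Finset.mem_univ _)]

lemma walkWt_append {a b : ℕ} (p : ℝ) (y : Fin a → Bool) (w : Fin b → Bool) :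
    walkWt p (Fin.append y w) = walkWt p y * walkWt p w := by
  unfold walkWt
  rw [Fin.prod_univ_add]
  simp

lemma walkPos_append_left {a b : ℕ} (y : Fin a → Bool) (w : Fin b → Bool) (j : ℕ)
    (hj : j ≤ a) : walkPos (Fin.append y w) j = walkPos y j := by
  unfold walkPos
  rw [Fin.sum_univ_add]
  have h2 : ∀ i : Fin b, (if ((Fin.natAdd a i : Fin (a+b)) : ℕ) < j then (if Fin.append y w (Fin.natAdd a i) then (1:ℤ) else -1) else 0) = 0 := by
    intro i
    rw [if_neg]
    simp only [Fin.coe_natAdd]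
    omega
  rw [Finset.sum_congr rfl (fun i _ => h2 i), Finset.sum_const_zero, add_zero]
  apply Finset.sum_congr rfl
  intro i _
  simp [Fin.append_left]

lemma walkPos_append_right {a b : ℕ} (y : Fin a → Bool) (w : Fin b → Bool) (k : ℕ) :
    walkPos (Fin.append y w) (a + k) = walkPos y a + walkPos w k := by
  unfold walkPos
  rw [Fin.sum_univ_add]
  congr 1
  · apply Finset.sum_congr rfl
    intro i _
    have h1 : ((Fin.castAdd b i : Fin (a+b)) : ℕ) < a + k := by
      simp only [Fin.coe_castAdd]; omega
    have h2 : (i : ℕ) < a := i.isLt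
    rw [if_pos h1, if_pos h2, Fin.append_left]
  · apply Finset.sum_congr rfl
    intro i _
    have : ((Fin.natAdd a i : Fin (a+b)) : ℕ) < a + k ↔ (i : ℕ) < k := by
      simp only [Fin.coe_natAdd]; omega
    rw [Fin.append_right]
    by_cases h : (i : ℕ) < k
    · rw [if_pos (this.mpr h), if_pos h]
    · rw [if_neg (fun hc => h (this.mp hc)), if_neg h]

lemma sum_append (a b : ℕ) (G : (Fin (a + b) → Bool) → ℝ) :
    ∑ x : Fin (a + b) → Bool, G x
      = ∑ y : Fin a → Bool, ∑ w : Fin b → Bool, G (Fin.append y w) := by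
  rw [← Equiv.sum_comp (Fin.appendEquiv a b) G, Fintype.sum_prod_type]
  rfl

def exitPMF (p : ℝ) (m n : ℕ) : ℝ :=
  ∑ x : Fin n → Bool,
    if (|walkPos x n| = (m : ℤ) ∧ ∀ j < n, |walkPos x j| < (m : ℤ)) then walkWt p x else 0

lemma walkWt_eq_pow {n : ℕ} (p : ℝ) (x : Fin n → Bool) :
    walkWt p x = p ^ (Finset.univ.filter (fun i => x i = true)).card
      * (1 - p) ^ (n - (Finset.univ.filter (fun i => x i = true)).card) := by
  unfold walkWt
  rw [Finset.prod_ite (f := fun _ => p) (g := fun _ => 1 - p)]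
  simp only [Finset.prod_const]
  congr 2
  rw [Finset.filter_not, Finset.card_sdiff_of_subset (Finset.filter_subset _ _)]
  simp

lemma card_filter_le {n : ℕ} (x : Fin n → Bool) :
    (Finset.univ.filter (fun i => x i = true)).card ≤ n := by
  calc (Finset.univ.filter (fun i => x i = true)).card ≤ (Finset.univ : Finset (Fin n)).card :=
        Finset.card_filter_le _ _
    _ = n := by simp

lemma walkPos_full {n : ℕ} (x : Fin n → Bool) :
    walkPos x n = 2 * ((Finset.univ.filter (fun i => x i = true)).card : ℤ) - n := by
  unfold walkPos
  have key : ∀ i : Fin n, (if (i : ℕ) < n then (if x i then (1:ℤ) else -1) else 0)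
      = 2 * (if x i then (1:ℤ) else 0) - 1 := by
    intro i
    rw [if_pos i.isLt]
    cases h : x i <;> simp
  rw [Finset.sum_congr rfl (fun i _ => key i)]
  rw [Finset.sum_sub_distrib, ← Finset.mul_sum, Finset.sum_boole, Finset.sum_const]
  simp [mul_comm]

lemma walkPos_not {n : ℕ} (x : Fin n → Bool) (j : ℕ) :
    walkPos (fun i => !(x i)) j = - walkPos x j := by
  unfold walkPos
  rw [← Finset.sum_neg_distrib]
  apply Finset.sum_congr rfl
  intro i _
  by_cases h : (i : ℕ) < j
  · rw [if_pos h, if_pos h]; cases hx : x i <;> simp [hx]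
  · rw [if_neg h, if_neg h]; simp

lemma walkWt_not {n m : ℕ} (p : ℝ) (x : Fin n → Bool) (hy : walkPos x n = (m : ℤ)) :
    walkWt p (fun i => !(x i)) * p ^ m = walkWt p x * (1 - p) ^ m := by
  set t := (Finset.univ.filter (fun i => x i = true)).card with ht
  have htn : t ≤ n := card_filter_le x
  have hpos := walkPos_full x
  rw [hy] at hpos
  have hnm : n + m = 2 * t := by omega
  have hcard : (Finset.univ.filter (fun i => (!(x i)) = true)).card = n - t := by
    have hcongr : (Finset.univ.filter (fun i => (!(x i)) = true))
        = (Finset.univ.filter (fun i => ¬ (x i = true))) := by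
      apply Finset.filter_congr
      intro i _
      simp
    rw [hcongr, Finset.filter_not, Finset.card_sdiff_of_subset (Finset.filter_subset _ _)]
    simp [ht]
  rw [walkWt_eq_pow, walkWt_eq_pow, hcard, ← ht]
  have h1 : n - (n - t) = t := by omega
  have h2 : t = (n - t) + m := by omega
  rw [h1]
  have e1 : p ^ (n - t) * p ^ m = p ^ t := by rw [← pow_add]; congr 1; omega
  have e2 : (1 - p) ^ (n - t) * (1 - p) ^ m = (1 - p) ^ t := by rw [← pow_add]; congr 1; omega
  rw [← e2, ← e1]
  ring

def fP (p : ℝ) (m : ℕ) (a : ℕ) : ℝ :=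
  ∑ x : Fin a → Bool,
    if (walkPos x a = (m : ℤ) ∧ ∀ j < a, |walkPos x j| < (m : ℤ)) then walkWt p x else 0

def fM (p : ℝ) (m : ℕ) (a : ℕ) : ℝ :=
  ∑ x : Fin a → Bool,
    if (walkPos x a = -(m : ℤ) ∧ ∀ j < a, |walkPos x j| < (m : ℤ)) then walkWt p x else 0

lemma exitPMF_eq_fP_add_fM (p : ℝ) {m : ℕ} (hm : 0 < m) (n : ℕ) :
    exitPMF p m n = fP p m n + fM p m n := by
  unfold exitPMF fP fM
  rw [← Finset.sum_add_distrib]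
  apply Finset.sum_congr rfl
  intro x _
  have habs : |walkPos x n| = (m : ℤ) ↔ walkPos x n = (m : ℤ) ∨ walkPos x n = -(m : ℤ) :=
    abs_eq (by positivity)
  by_cases hI : ∀ j < n, |walkPos x j| < (m : ℤ)
  · by_cases h1 : walkPos x n = (m : ℤ)
    · have h2 : ¬ walkPos x n = -(m : ℤ) := by
        rw [h1]; intro hc; have : (m:ℤ) > 0 := by exact_mod_cast hm
        omega
      rw [if_pos ⟨habs.mpr (Or.inl h1), hI⟩, if_pos ⟨h1, hI⟩, if_neg (fun hc => h2 hc.1), add_zero]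
    · by_cases h2 : walkPos x n = -(m : ℤ)
      · rw [if_pos ⟨habs.mpr (Or.inr h2), hI⟩, if_neg (fun hc => h1 hc.1),
          if_pos ⟨h2, hI⟩, zero_add]
      · rw [if_neg, if_neg (fun hc => h1 hc.1), if_neg (fun hc => h2 hc.1), add_zero]
        intro hc
        rcases habs.mp hc.1 with h | h
        · exact h1 h
        · exact h2 h
  · rw [if_neg (fun hc => hI hc.2), if_neg (fun hc => hI hc.2), if_neg (fun hc => hI hc.2),
      add_zero]

def negEquiv (n : ℕ) : (Fin n → Bool) ≃ (Fin n → Bool) :=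
  ⟨fun z i => !(z i), fun z i => !(z i), fun z => by funext i; simp, fun z => by funext i; simp⟩

lemma fM_mul (p : ℝ) (m n : ℕ) : fM p m n * p ^ m = fP p m n * (1 - p) ^ m := by
  unfold fM fP
  rw [Finset.sum_mul, Finset.sum_mul]
  rw [← Equiv.sum_comp (negEquiv n) (fun x => (if (walkPos x n = -(m : ℤ) ∧ ∀ j < n, |walkPos x j| < (m : ℤ))
      then walkWt p x else 0) * p ^ m)]
  apply Finset.sum_congr rfl
  intro z _
  simp only [negEquiv, Equiv.coe_fn_mk]
  show (if (walkPos (fun i => !(z i)) n = -(m : ℤ) ∧ ∀ j < n, |walkPos (fun i => !(z i)) j| < (m : ℤ))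
      then walkWt p (fun i => !(z i)) else 0) * p ^ m
    = (if (walkPos z n = (m : ℤ) ∧ ∀ j < n, |walkPos z j| < (m : ℤ)) then walkWt p z else 0)
        * (1 - p) ^ m
  have hcond : (walkPos (fun i => !(z i)) n = -(m : ℤ) ∧ ∀ j < n, |walkPos (fun i => !(z i)) j| < (m : ℤ))
      ↔ (walkPos z n = (m : ℤ) ∧ ∀ j < n, |walkPos z j| < (m : ℤ)) := by
    constructor
    · rintro ⟨h1, h2⟩
      refine ⟨by rw [walkPos_not] at h1; omega, fun j hj => ?_⟩
      have := h2 j hj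
      rw [walkPos_not, abs_neg] at this
      exact this
    · rintro ⟨h1, h2⟩
      refine ⟨by rw [walkPos_not]; omega, fun j hj => ?_⟩
      rw [walkPos_not, abs_neg]
      exact h2 j hj
  by_cases hc : walkPos z n = (m : ℤ) ∧ ∀ j < n, |walkPos z j| < (m : ℤ)
  · rw [if_pos (hcond.mpr hc), if_pos hc]
    exact walkWt_not p z hc.1
  · rw [if_neg (fun h => hc (hcond.mp h)), if_neg hc, zero_mul, zero_mul]

lemma fP_eq (p : ℝ) (hp : 0 < p) (hp1 : p < 1) {m : ℕ} (hm : 0 < m) (n : ℕ) :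
    fP p m n = (p ^ m / (p ^ m + (1 - p) ^ m)) * exitPMF p m n := by
  have hA : (0:ℝ) < p ^ m := pow_pos hp m
  have hB : (0:ℝ) < (1 - p) ^ m := pow_pos (by linarith) m
  have h1 := exitPMF_eq_fP_add_fM p hm n
  have h2 := fM_mul p m n
  have hAB : p ^ m + (1 - p) ^ m ≠ 0 := ne_of_gt (add_pos hA hB)
  rw [h1, div_mul_eq_mul_div, eq_div_iff hAB]
  linear_combination (-1 : ℝ) * h2

lemma fM_eq (p : ℝ) (hp : 0 < p) (hp1 : p < 1) {m : ℕ} (hm : 0 < m) (n : ℕ) :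
    fM p m n = (1 - p ^ m / (p ^ m + (1 - p) ^ m)) * exitPMF p m n := by
  have h1 := exitPMF_eq_fP_add_fM p hm n
  have h2 := fP_eq p hp hp1 hm n
  have h3 : fM p m n = exitPMF p m n - fP p m n := by rw [h1]; ring
  rw [h3, h2]; ring

def convPow (f : ℕ → ℝ) : ℕ → ℕ → ℝ
  | 0, n => if n = 0 then 1 else 0
  | j + 1, n => ∑ a ∈ Finset.range (n + 1), f a * convPow f j (n - a)


lemma fP_def (p : ℝ) (m a : ℕ) : fP p m a =
  ∑ x : Fin a → Bool,
    if (walkPos x a = (m : ℤ) ∧ ∀ j < a, |walkPos x j| < (m : ℤ)) then walkWt p x else 0 := rfl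

lemma fM_def (p : ℝ) (m a : ℕ) : fM p m a =
  ∑ x : Fin a → Bool,
    if (walkPos x a = -(m : ℤ) ∧ ∀ j < a, |walkPos x j| < (m : ℤ)) then walkWt p x else 0 := rfl

lemma exitPMF_def (p : ℝ) (m n : ℕ) : exitPMF p m n =
  ∑ x : Fin n → Bool,
    if (|walkPos x n| = (m : ℤ) ∧ ∀ j < n, |walkPos x j| < (m : ℤ)) then walkWt p x else 0 := rfl

def Hfun (p : ℝ) (m : ℕ) (s : ℤ) (r : ℕ) : ℝ :=
  ∑ z : Fin r → Bool,
    if ((∀ k < r, |s + walkPos z k| < 2 * (m : ℤ)) ∧ |s + walkPos z r| = 2 * (m : ℤ))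
      then walkWt p z else 0

lemma Hfun_zero_start (p : ℝ) (m r : ℕ) : Hfun p m 0 r = exitPMF p (2 * m) r := by
  rw [Hfun, exitPMF_def]
  apply Finset.sum_congr rfl
  intro z _
  have hc : ((∀ k < r, |(0:ℤ) + walkPos z k| < 2 * (m : ℤ)) ∧ |(0:ℤ) + walkPos z r| = 2 * (m : ℤ))
      ↔ (|walkPos z r| = ((2 * m : ℕ) : ℤ) ∧ ∀ j < r, |walkPos z j| < ((2 * m : ℕ) : ℤ)) := by
    push_cast
    simp only [zero_add]
    exact and_comm
  by_cases h : |walkPos z r| = ((2 * m : ℕ) : ℤ) ∧ ∀ j < r, |walkPos z j| < ((2 * m : ℕ) : ℤ)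
  · rw [if_pos (hc.mpr h), if_pos h]
  · rw [if_neg (fun hh => h (hc.mp hh)), if_neg h]

lemma Hfun_boundary (p : ℝ) (m : ℕ) (s : ℤ) (hs : |s| = 2 * (m : ℤ)) (r : ℕ) :
    Hfun p m s r = if r = 0 then 1 else 0 := by
  rcases Nat.eq_zero_or_pos r with hr | hr
  · subst hr
    rw [if_pos rfl, Hfun]
    rw [Fintype.sum_eq_single (fun _ => true)
      (fun y hy => absurd (funext fun i => absurd i.isLt (Nat.not_lt_zero _)) hy)]
    rw [if_pos ⟨fun k hk => absurd hk (by omega), by rw [walkPos_zero, add_zero]; exact hs⟩]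
    show walkWt _ _ = 1
    unfold walkWt
    simp
  · rw [if_neg (by omega), Hfun]
    apply Finset.sum_eq_zero
    intro z _
    rw [if_neg]
    rintro ⟨h1, -⟩
    have := h1 0 hr
    rw [walkPos_zero, add_zero, hs] at this
    exact lt_irrefl _ this

lemma ite_or_split {A B C : Prop} [Decidable A] [Decidable B] [Decidable C]
    (h : A ↔ B ∨ C) (hx : ¬(B ∧ C)) (c : ℝ) :
    (if A then c else 0) = (if B then c else 0) + (if C then c else 0) := by
  by_cases hB : B
  · have hnC : ¬C := fun hC => hx ⟨hB, hC⟩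
    rw [if_pos (h.mpr (Or.inl hB)), if_pos hB, if_neg hnC, add_zero]
  · by_cases hC : C
    · rw [if_pos (h.mpr (Or.inr hC)), if_neg hB, if_pos hC, zero_add]
    · rw [if_neg (fun hA => (h.mp hA).elim hB hC), if_neg hB, if_neg hC, add_zero]

lemma ite_and_mul {B Q : Prop} [Decidable B] [Decidable Q] (c d : ℝ) :
    (if (B ∧ Q) then c * d else 0) = (if B then c else 0) * (if Q then d else 0) := by
  by_cases hB : B <;> by_cases hQ : Q <;> simp [hB, hQ]

lemma backward_big (m : ℕ) (hm : 0 < m) (s ε : ℤ) (hs : |s| ≤ (m : ℤ)) (hε : |ε| = (m : ℤ))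
    {a b : ℕ} (y : Fin a → Bool) (w : Fin b → Bool)
    (hya : walkPos y a = ε) (hfh : ∀ j < a, |walkPos y j| < (m : ℤ))
    (hQint : ∀ k < b, |s + ε + walkPos w k| < 2 * (m : ℤ))
    (hQend : |s + ε + walkPos w b| = 2 * (m : ℤ)) :
    ((∀ k < a + b, |s + walkPos (Fin.append y w) k| < 2 * (m : ℤ))
      ∧ |s + walkPos (Fin.append y w) (a + b)| = 2 * (m : ℤ))
    ∧ (|walkPos (Fin.append y w) a| = (m : ℤ)
      ∧ ∀ j < a, |walkPos (Fin.append y w) j| < (m : ℤ)) := by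
  refine ⟨⟨?_, ?_⟩, ?_, ?_⟩
  · intro k hk
    by_cases hka : k < a
    · rw [walkPos_append_left y w k hka.le]
      calc |s + walkPos y k| ≤ |s| + |walkPos y k| := abs_add_le _ _
        _ < 2 * (m : ℤ) := by have := hfh k hka; omega
    · have hk' : k = a + (k - a) := by omega
      rw [hk', walkPos_append_right y w (k - a)]
      have heq : s + (walkPos y a + walkPos w (k - a)) = s + ε + walkPos w (k - a) := by
        rw [hya]; ring
      rw [heq]
      exact hQint (k - a) (by omega)
  · rw [walkPos_append_right y w b]
    have heq : s + (walkPos y a + walkPos w b) = s + ε + walkPos w b := by rw [hya]; ring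
    rw [heq]; exact hQend
  · rw [walkPos_append_left y w a le_rfl, hya]; exact hε
  · intro j hj
    rw [walkPos_append_left y w j hj.le]; exact hfh j hj

lemma split_at (p : ℝ) (m : ℕ) (hm : 0 < m) (s : ℤ) (hs : |s| ≤ (m : ℤ)) (a b : ℕ) :
    (∑ x : Fin (a + b) → Bool,
      if (((∀ k < a + b, |s + walkPos x k| < 2 * (m : ℤ)) ∧ |s + walkPos x (a + b)| = 2 * (m : ℤ))
          ∧ (|walkPos x a| = (m : ℤ) ∧ ∀ j < a, |walkPos x j| < (m : ℤ)))
        then walkWt p x else 0)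
    = fP p m a * Hfun p m (s + (m : ℤ)) b + fM p m a * Hfun p m (s - (m : ℤ)) b := by
  rw [sum_append a b]
  have key : ∀ (y : Fin a → Bool) (w : Fin b → Bool),
      (if (((∀ k < a + b, |s + walkPos (Fin.append y w) k| < 2 * (m : ℤ))
            ∧ |s + walkPos (Fin.append y w) (a + b)| = 2 * (m : ℤ))
          ∧ (|walkPos (Fin.append y w) a| = (m : ℤ)
            ∧ ∀ j < a, |walkPos (Fin.append y w) j| < (m : ℤ)))
        then walkWt p (Fin.append y w) else 0)
      = (if (walkPos y a = (m : ℤ) ∧ ∀ j < a, |walkPos y j| < (m : ℤ)) then walkWt p y else 0)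
          * (if ((∀ k < b, |s + (m : ℤ) + walkPos w k| < 2 * (m : ℤ))
              ∧ |s + (m : ℤ) + walkPos w b| = 2 * (m : ℤ)) then walkWt p w else 0)
        + (if (walkPos y a = -(m : ℤ) ∧ ∀ j < a, |walkPos y j| < (m : ℤ)) then walkWt p y else 0)
          * (if ((∀ k < b, |s - (m : ℤ) + walkPos w k| < 2 * (m : ℤ))
              ∧ |s - (m : ℤ) + walkPos w b| = 2 * (m : ℤ)) then walkWt p w else 0) := by
    intro y w
    rw [walkWt_append, ← ite_and_mul, ← ite_and_mul]
    apply ite_or_split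
    · constructor
      · rintro ⟨⟨hint, hend⟩, habs, hfh⟩
        rw [walkPos_append_left y w a le_rfl] at habs
        have hfh' : ∀ j < a, |walkPos y j| < (m : ℤ) := fun j hj => by
          rw [← walkPos_append_left y w j (le_of_lt hj)]; exact hfh j hj
        have hint' : ∀ k < b, |s + walkPos y a + walkPos w k| < 2 * (m : ℤ) := by
          intro k hk
          have h1 := hint (a + k) (by omega)
          rw [walkPos_append_right y w k] at h1
          have heq : s + (walkPos y a + walkPos w k) = s + walkPos y a + walkPos w k := by ring
          rwa [heq] at h1
        have hend' : |s + walkPos y a + walkPos w b| = 2 * (m : ℤ) := by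
          rw [walkPos_append_right y w b] at hend
          have heq : s + (walkPos y a + walkPos w b) = s + walkPos y a + walkPos w b := by ring
          rwa [heq] at hend
        rcases (abs_eq (by positivity : (0:ℤ) ≤ (m : ℤ))).mp habs with hya | hya
        · left
          refine ⟨⟨hya, hfh'⟩, fun k hk => ?_, ?_⟩
          · have := hint' k hk; rwa [hya] at this
          · have := hend'; rwa [hya] at this
        · right
          refine ⟨⟨hya, hfh'⟩, fun k hk => ?_, ?_⟩
          · have := hint' k hk; rw [hya] at this
            rwa [show s + -(m : ℤ) = s - (m : ℤ) by ring] at this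
          · have := hend'; rw [hya] at this
            rwa [show s + -(m : ℤ) = s - (m : ℤ) by ring] at this
      · rintro (⟨⟨hya, hfh⟩, hQint, hQend⟩ | ⟨⟨hya, hfh⟩, hQint, hQend⟩)
        · exact backward_big m hm s (m : ℤ) hs (abs_of_nonneg (by positivity)) y w hya hfh
            hQint hQend
        · refine backward_big m hm s (-(m : ℤ)) hs (by rw [abs_neg]; exact abs_of_nonneg (by positivity)) y w hya hfh ?_ ?_
          · intro k hk
            have := hQint k hk
            rwa [show s - (m : ℤ) = s + -(m : ℤ) by ring] at this
          · have := hQend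
            rwa [show s - (m : ℤ) = s + -(m : ℤ) by ring] at this
    · rintro ⟨⟨⟨hya, -⟩, -⟩, ⟨hya', -⟩, -⟩
      rw [hya] at hya'
      have : (m : ℤ) > 0 := by exact_mod_cast hm
      omega
  rw [Finset.sum_congr rfl (fun y _ => Finset.sum_congr rfl (fun w _ => key y w))]
  rw [Finset.sum_congr rfl (fun y (_ : y ∈ Finset.univ) => by
    rw [Finset.sum_add_distrib, ← Finset.mul_sum, ← Finset.mul_sum])]
  rw [Finset.sum_add_distrib, ← Finset.sum_mul, ← Finset.sum_mul, ← fP_def, ← fM_def]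
  rfl

lemma abs_step_le {r : ℕ} (z : Fin r → Bool) (j : ℕ) (hj : j < r) :
    |walkPos z (j + 1)| ≤ |walkPos z j| + 1 := by
  rw [walkPos_succ z j hj]
  calc |walkPos z j + (if z ⟨j, hj⟩ then (1:ℤ) else -1)|
      ≤ |walkPos z j| + |(if z ⟨j, hj⟩ then (1:ℤ) else -1)| := abs_add_le _ _
    _ ≤ |walkPos z j| + 1 := by split_ifs <;> simp

lemma first_hit (m : ℕ) (hm : 0 < m) (s : ℤ) (hs : |s| ≤ (m : ℤ)) {r : ℕ} (z : Fin r → Bool)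
    (hE : (∀ k < r, |s + walkPos z k| < 2 * (m : ℤ)) ∧ |s + walkPos z r| = 2 * (m : ℤ)) :
    ∃ a, a ≤ r ∧ (|walkPos z a| = (m : ℤ) ∧ ∀ j < a, |walkPos z j| < (m : ℤ)) := by
  have hQr : (m : ℤ) ≤ |walkPos z r| := by
    have h1 := hE.2
    have h2 : |s + walkPos z r| - |s| ≤ |walkPos z r| := by
      have := abs_sub_abs_le_abs_sub (s + walkPos z r) s
      simpa using this
    have hm' : (0:ℤ) < (m:ℤ) := by exact_mod_cast hm
    linarith [h1, hs]
  have hex : ∃ k, (m : ℤ) ≤ |walkPos z k| := ⟨r, hQr⟩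
  have hQa : (m : ℤ) ≤ |walkPos z (Nat.find hex)| := Nat.find_spec hex
  have hmin : ∀ j < Nat.find hex, |walkPos z j| < (m : ℤ) := fun j hj =>
    lt_of_not_ge (Nat.find_min hex hj)
  have har : Nat.find hex ≤ r := Nat.find_le hQr
  have ha0 : Nat.find hex ≠ 0 := by
    intro h
    rw [h, walkPos_zero] at hQa
    simp at hQa
    have hm' : (0:ℤ) < (m:ℤ) := by exact_mod_cast hm
    linarith
  obtain ⟨a', ha'⟩ := Nat.exists_eq_succ_of_ne_zero ha0
  refine ⟨Nat.find hex, har, le_antisymm ?_ hQa, hmin⟩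
  have hstep := abs_step_le z a' (by omega)
  have hlt := hmin a' (by omega)
  rw [ha'] at hQa ⊢
  linarith

lemma FH_unique {r m : ℕ} (z : Fin r → Bool) {a a' : ℕ}
    (h : |walkPos z a| = (m : ℤ) ∧ ∀ j < a, |walkPos z j| < (m : ℤ))
    (h' : |walkPos z a'| = (m : ℤ) ∧ ∀ j < a', |walkPos z j| < (m : ℤ)) : a = a' := by
  rcases lt_trichotomy a a' with h1 | h1 | h1
  · have := h'.2 a h1
    rw [h.1] at this
    exact absurd this (lt_irrefl _)
  · exact h1
  · have := h.2 a' h1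
    rw [h'.1] at this
    exact absurd this (lt_irrefl _)

lemma split_at' (p : ℝ) (m : ℕ) (hm : 0 < m) (s : ℤ) (hs : |s| ≤ (m : ℤ)) (r a b : ℕ)
    (hr : r = a + b) :
    (∑ x : Fin r → Bool,
      if (((∀ k < r, |s + walkPos x k| < 2 * (m : ℤ)) ∧ |s + walkPos x r| = 2 * (m : ℤ))
          ∧ (|walkPos x a| = (m : ℤ) ∧ ∀ j < a, |walkPos x j| < (m : ℤ)))
        then walkWt p x else 0)
    = fP p m a * Hfun p m (s + (m : ℤ)) b + fM p m a * Hfun p m (s - (m : ℤ)) b := by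
  subst hr
  exact split_at p m hm s hs a b

lemma Hfun_split (p : ℝ) (m : ℕ) (hm : 0 < m) (s : ℤ) (hs : |s| ≤ (m : ℤ)) (r : ℕ) :
    Hfun p m s r = ∑ a ∈ Finset.range (r + 1),
      (fP p m a * Hfun p m (s + (m : ℤ)) (r - a)
        + fM p m a * Hfun p m (s - (m : ℤ)) (r - a)) := by
  have pointwise : ∀ z : Fin r → Bool,
      (if ((∀ k < r, |s + walkPos z k| < 2 * (m : ℤ)) ∧ |s + walkPos z r| = 2 * (m : ℤ))
        then walkWt p z else 0)
      = ∑ a ∈ Finset.range (r + 1),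
          (if (((∀ k < r, |s + walkPos z k| < 2 * (m : ℤ)) ∧ |s + walkPos z r| = 2 * (m : ℤ))
              ∧ (|walkPos z a| = (m : ℤ) ∧ ∀ j < a, |walkPos z j| < (m : ℤ)))
            then walkWt p z else 0) := by
    intro z
    by_cases hE : (∀ k < r, |s + walkPos z k| < 2 * (m : ℤ)) ∧ |s + walkPos z r| = 2 * (m : ℤ)
    · obtain ⟨a₀, ha₀r, hFH⟩ := first_hit m hm s hs z hE
      rw [if_pos hE,
        Finset.sum_eq_single a₀
          (fun a _ hne => by
            rw [if_neg]
            rintro ⟨-, hFH'⟩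
            exact hne (FH_unique z hFH' hFH))
          (fun h => absurd (Finset.mem_range.mpr (by omega)) h),
        if_pos ⟨hE, hFH⟩]
    · rw [if_neg hE]
      symm
      apply Finset.sum_eq_zero
      intro a _
      rw [if_neg]
      rintro ⟨hE', -⟩
      exact hE hE'
  rw [Hfun, Finset.sum_congr rfl (fun z _ => pointwise z), Finset.sum_comm]
  apply Finset.sum_congr rfl
  intro a ha
  exact split_at' p m hm s hs r a (r - a) (by rw [Finset.mem_range] at ha; omega)
lemma tri (φ : ℕ → ℕ → ℝ) (r : ℕ) :
    ∑ a ∈ Finset.range (r + 1), ∑ b ∈ Finset.range (r + 1 - a), φ a b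
      = ∑ t ∈ Finset.range (r + 1), ∑ a ∈ Finset.range (t + 1), φ a (t - a) := by
  rw [Finset.sum_sigma', Finset.sum_sigma']
  refine Finset.sum_nbij' (i := fun x : Σ _ : ℕ, ℕ => (⟨x.1 + x.2, x.1⟩ : Σ _ : ℕ, ℕ))
    (j := fun x : Σ _ : ℕ, ℕ => (⟨x.2, x.1 - x.2⟩ : Σ _ : ℕ, ℕ)) ?_ ?_ ?_ ?_ ?_
  · rintro ⟨a, b⟩ h
    simp at h ⊢
    omega
  · rintro ⟨t, a⟩ h
    simp at h ⊢
    omega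
  · rintro ⟨a, b⟩ h
    simp at h ⊢
  · rintro ⟨t, a⟩ h
    simp at h ⊢
    omega
  · rintro ⟨a, b⟩ h
    simp at h ⊢

lemma convPow_one (f : ℕ → ℝ) (n : ℕ) : convPow f 1 n = f n := by
  show (∑ a ∈ Finset.range (n + 1), f a * convPow f 0 (n - a)) = f n
  rw [Finset.sum_eq_single n
    (fun a ha hne => by
      rw [Finset.mem_range] at ha
      show f a * (if n - a = 0 then (1:ℝ) else 0) = 0
      rw [if_neg (by omega), mul_zero])
    (fun h => absurd (Finset.mem_range.mpr (by omega)) h)]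
  show f n * (if n - n = 0 then (1:ℝ) else 0) = f n
  rw [if_pos (by omega), mul_one]

lemma convPow_eq_zero {f : ℕ → ℝ} (hf0 : f 0 = 0) : ∀ k n, n < k → convPow f k n = 0 := by
  intro k
  induction k with
  | zero => intro n hn; omega
  | succ k ih =>
    intro n hn
    show (∑ a ∈ Finset.range (n + 1), f a * convPow f k (n - a)) = 0
    apply Finset.sum_eq_zero
    intro a ha
    rw [Finset.mem_range] at ha
    rcases Nat.eq_zero_or_pos a with ha0 | ha0
    · rw [ha0, hf0, zero_mul]
    · rw [ih (n - a) (by omega), mul_zero]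

lemma convPow_add (f : ℕ → ℝ) (k l n : ℕ) :
    convPow f (k + l) n
      = ∑ t ∈ Finset.range (n + 1), convPow f k t * convPow f l (n - t) := by
  induction k generalizing n with
  | zero =>
    rw [Nat.zero_add]
    rw [Finset.sum_eq_single 0
      (fun t ht hne => by
        show (if t = 0 then (1:ℝ) else 0) * convPow f l (n - t) = 0
        rw [if_neg hne, zero_mul])
      (fun h => absurd (Finset.mem_range.mpr (by omega)) h)]
    show convPow f l n = (if (0:ℕ) = 0 then (1:ℝ) else 0) * convPow f l (n - 0)
    rw [if_pos rfl, one_mul, Nat.sub_zero]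
  | succ k ih =>
    rw [show k + 1 + l = (k + l) + 1 by omega]
    show (∑ a ∈ Finset.range (n + 1), f a * convPow f (k + l) (n - a)) = _
    have step1 : ∀ a ∈ Finset.range (n + 1),
        f a * convPow f (k + l) (n - a)
          = ∑ t ∈ Finset.range (n + 1 - a), f a * (convPow f k t * convPow f l (n - a - t)) := by
      intro a ha
      rw [Finset.mem_range] at ha
      rw [ih (n - a), Finset.mul_sum]
      apply Finset.sum_congr (by congr 1; omega)
      intro t _
      rfl
    rw [Finset.sum_congr rfl step1]
    rw [tri (fun a t => f a * (convPow f k t * convPow f l (n - a - t))) n]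
    apply Finset.sum_congr rfl
    intro t ht
    rw [Finset.mem_range] at ht
    show (∑ a ∈ Finset.range (t + 1), f a * (convPow f k (t - a) * convPow f l (n - a - (t - a))))
      = convPow f (k + 1) t * convPow f l (n - t)
    have : ∀ a ∈ Finset.range (t + 1),
        f a * (convPow f k (t - a) * convPow f l (n - a - (t - a)))
          = (f a * convPow f k (t - a)) * convPow f l (n - t) := by
      intro a ha
      rw [Finset.mem_range] at ha
      have : n - a - (t - a) = n - t := by omega
      rw [this]; ring
    rw [Finset.sum_congr rfl this, ← Finset.sum_mul]
    rfl

lemma convPow_two (f : ℕ → ℝ) (r : ℕ) :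
    convPow f 2 r = ∑ a ∈ Finset.range (r + 1), f a * f (r - a) := by
  show (∑ a ∈ Finset.range (r + 1), f a * convPow f 1 (r - a)) = _
  exact Finset.sum_congr rfl (fun a _ => by rw [convPow_one])

def Rgeom (f : ℕ → ℝ) (q : ℝ) (n : ℕ) : ℝ :=
  ∑ j ∈ Finset.range (n + 1), (q * (1 - q) ^ j) * convPow f (2 * (j + 1)) n

lemma Rgeom_rec (f : ℕ → ℝ) (q : ℝ) (hf0 : f 0 = 0) (n : ℕ) :
    Rgeom f q n = q * convPow f 2 n
      + (1 - q) * ∑ t ∈ Finset.range (n + 1), convPow f 2 t * Rgeom f q (n - t) := by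
  have hext : ∀ t ∈ Finset.range (n + 1),
      convPow f 2 t * Rgeom f q (n - t)
        = ∑ j ∈ Finset.range (n + 1),
            convPow f 2 t * ((q * (1 - q) ^ j) * convPow f (2 * (j + 1)) (n - t)) := by
    intro t ht
    rw [Finset.mem_range] at ht
    rw [Rgeom, Finset.mul_sum]
    apply Finset.sum_subset (Finset.range_subset_range.mpr (by omega))
    intro j _ hj
    rw [Finset.mem_range] at hj
    rw [convPow_eq_zero hf0 (2 * (j + 1)) (n - t) (by omega)]
    ring
  rw [Finset.sum_congr rfl hext, Finset.sum_comm]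
  have inner : ∀ j ∈ Finset.range (n + 1),
      (∑ t ∈ Finset.range (n + 1),
        convPow f 2 t * ((q * (1 - q) ^ j) * convPow f (2 * (j + 1)) (n - t)))
      = (q * (1 - q) ^ j) * convPow f (2 * (j + 2)) n := by
    intro j _
    rw [show 2 * (j + 2) = 2 + 2 * (j + 1) by omega, convPow_add f 2 (2 * (j + 1)) n,
      Finset.mul_sum]
    apply Finset.sum_congr rfl
    intro t _
    ring
  rw [Finset.sum_congr rfl inner]
  rw [Rgeom, Finset.sum_range_succ' (fun j => (q * (1 - q) ^ j) * convPow f (2 * (j + 1)) n) n]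
  rw [Finset.mul_sum]
  have last : ∑ j ∈ Finset.range (n + 1),
      (1 - q) * ((q * (1 - q) ^ j) * convPow f (2 * (j + 2)) n)
      = ∑ j ∈ Finset.range n, (q * (1 - q) ^ (j + 1)) * convPow f (2 * (j + 1 + 1)) n := by
    rw [Finset.sum_range_succ]
    rw [convPow_eq_zero hf0 (2 * (n + 2)) n (by omega)]
    simp only [mul_zero, add_zero]
    apply Finset.sum_congr rfl
    intro j _
    ring
  rw [last]
  ring

lemma geom_solve (f g : ℕ → ℝ) (q : ℝ) (hf0 : f 0 = 0)
    (hrec : ∀ r, g r = q * convPow f 2 r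
      + (1 - q) * ∑ t ∈ Finset.range (r + 1), convPow f 2 t * g (r - t)) :
    ∀ n, g n = Rgeom f q n := by
  intro n
  induction n using Nat.strong_induction_on with
  | _ n ih =>
    rw [hrec n]
    have : ∀ t ∈ Finset.range (n + 1),
        convPow f 2 t * g (n - t) = convPow f 2 t * Rgeom f q (n - t) := by
      intro t ht
      rw [Finset.mem_range] at ht
      rcases Nat.eq_zero_or_pos t with h0 | h0
      · rw [h0, convPow_eq_zero hf0 2 0 (by omega), zero_mul, zero_mul]
      · rw [ih (n - t) (by omega)]
    rw [Finset.sum_congr rfl this, ← Rgeom_rec f q hf0 n]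

lemma combo {X X' Y Y' Z : ℝ} {u v w : ℕ → ℝ} {S : Finset ℕ}
    (hY : X * Y + X' * Y' = Z) (hpt : ∀ b ∈ S, X * u b + X' * v b = w b) :
    X * (Y + ∑ b ∈ S, u b) + X' * (Y' + ∑ b ∈ S, v b) = Z + ∑ b ∈ S, w b := by
  rw [mul_add, mul_add, Finset.mul_sum, Finset.mul_sum, ← hY,
    ← Finset.sum_congr rfl hpt, Finset.sum_add_distrib]
  ring

lemma Hfun_level (p : ℝ) (m : ℕ) (hm : 0 < m) (t : ℕ) :
    Hfun p m (m : ℤ) t = fP p m t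
      + ∑ b ∈ Finset.range (t + 1), fM p m b * exitPMF p (2 * m) (t - b) := by
  have hsm : |((m : ℕ) : ℤ)| ≤ (m : ℤ) := by rw [abs_of_nonneg (by positivity)]
  rw [Hfun_split p m hm (m : ℤ) hsm t]
  have hstep : ∀ b ∈ Finset.range (t + 1),
      fP p m b * Hfun p m ((m : ℤ) + (m : ℤ)) (t - b)
          + fM p m b * Hfun p m ((m : ℤ) - (m : ℤ)) (t - b)
        = fP p m b * (if t - b = 0 then 1 else 0)
          + fM p m b * exitPMF p (2 * m) (t - b) := by
    intro b _
    rw [Hfun_boundary p m ((m : ℤ) + (m : ℤ))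
        (by rw [abs_of_nonneg (by positivity)]; ring) (t - b),
      show ((m : ℤ) - (m : ℤ)) = 0 by ring, Hfun_zero_start]
  rw [Finset.sum_congr rfl hstep, Finset.sum_add_distrib]
  congr 1
  rw [Finset.sum_eq_single t
    (fun b hb hne => by
      rw [Finset.mem_range] at hb
      rw [if_neg (by omega), mul_zero])
    (fun h => absurd (Finset.mem_range.mpr (by omega)) h)]
  rw [if_pos (by omega), mul_one]

lemma Hfun_levelM (p : ℝ) (m : ℕ) (hm : 0 < m) (t : ℕ) :
    Hfun p m (-(m : ℤ)) t = fM p m t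
      + ∑ b ∈ Finset.range (t + 1), fP p m b * exitPMF p (2 * m) (t - b) := by
  have hsm : |(-(m : ℤ))| ≤ (m : ℤ) := by rw [abs_neg, abs_of_nonneg (by positivity)]
  rw [Hfun_split p m hm (-(m : ℤ)) hsm t]
  have hstep : ∀ b ∈ Finset.range (t + 1),
      fP p m b * Hfun p m (-(m : ℤ) + (m : ℤ)) (t - b)
          + fM p m b * Hfun p m (-(m : ℤ) - (m : ℤ)) (t - b)
        = fP p m b * exitPMF p (2 * m) (t - b)
          + fM p m b * (if t - b = 0 then 1 else 0) := by
    intro b _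
    rw [show (-(m : ℤ) + (m : ℤ)) = 0 by ring, Hfun_zero_start,
      Hfun_boundary p m (-(m : ℤ) - (m : ℤ))
        (by rw [show (-(m : ℤ) - (m : ℤ)) = -(2 * (m:ℤ)) by ring, abs_neg,
              abs_of_nonneg (by positivity)]) (t - b)]
  rw [Finset.sum_congr rfl hstep, Finset.sum_add_distrib, add_comm]
  congr 1
  rw [Finset.sum_eq_single t
    (fun b hb hne => by
      rw [Finset.mem_range] at hb
      rw [if_neg (by omega), mul_zero])
    (fun h => absurd (Finset.mem_range.mpr (by omega)) h)]
  rw [if_pos (by omega), mul_one]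

lemma g_rec (p : ℝ) (hp : 0 < p) (hp1 : p < 1) (m : ℕ) (hm : 0 < m) (r : ℕ) :
    exitPMF p (2 * m) r
      = ((p ^ m / (p ^ m + (1 - p) ^ m)) ^ 2 + (1 - p ^ m / (p ^ m + (1 - p) ^ m)) ^ 2)
          * convPow (exitPMF p m) 2 r
        + (1 - ((p ^ m / (p ^ m + (1 - p) ^ m)) ^ 2 + (1 - p ^ m / (p ^ m + (1 - p) ^ m)) ^ 2))
          * ∑ t ∈ Finset.range (r + 1),
              convPow (exitPMF p m) 2 t * exitPMF p (2 * m) (r - t) := by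
  have hs0 : |(0 : ℤ)| ≤ (m : ℤ) := by rw [abs_zero]; positivity
  calc exitPMF p (2 * m) r
      = ∑ a ∈ Finset.range (r + 1),
          (fP p m a * Hfun p m ((m : ℕ) : ℤ) (r - a)
            + fM p m a * Hfun p m (-((m : ℕ) : ℤ)) (r - a)) := by
        rw [← Hfun_zero_start p m r, Hfun_split p m hm 0 hs0 r]
        simp only [zero_add, zero_sub]
    _ = ∑ a ∈ Finset.range (r + 1),
          ((p ^ m / (p ^ m + (1 - p) ^ m)) * exitPMF p m a
              * ((p ^ m / (p ^ m + (1 - p) ^ m)) * exitPMF p m (r - a)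
                + ∑ b ∈ Finset.range (r - a + 1),
                    (1 - p ^ m / (p ^ m + (1 - p) ^ m)) * exitPMF p m b
                      * exitPMF p (2 * m) (r - a - b))
            + (1 - p ^ m / (p ^ m + (1 - p) ^ m)) * exitPMF p m a
              * ((1 - p ^ m / (p ^ m + (1 - p) ^ m)) * exitPMF p m (r - a)
                + ∑ b ∈ Finset.range (r - a + 1),
                    (p ^ m / (p ^ m + (1 - p) ^ m)) * exitPMF p m b
                      * exitPMF p (2 * m) (r - a - b))) := by
        apply Finset.sum_congr rfl
        intro a _
        rw [Hfun_level p m hm (r - a), Hfun_levelM p m hm (r - a)]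
        simp only [fP_eq p hp hp1 hm, fM_eq p hp hp1 hm]
    _ = ∑ a ∈ Finset.range (r + 1),
          (((p ^ m / (p ^ m + (1 - p) ^ m)) ^ 2 + (1 - p ^ m / (p ^ m + (1 - p) ^ m)) ^ 2)
              * (exitPMF p m a * exitPMF p m (r - a))
            + ∑ b ∈ Finset.range (r - a + 1),
                (1 - ((p ^ m / (p ^ m + (1 - p) ^ m)) ^ 2
                    + (1 - p ^ m / (p ^ m + (1 - p) ^ m)) ^ 2))
                  * (exitPMF p m a * exitPMF p m b * exitPMF p (2 * m) (r - a - b))) := by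
        apply Finset.sum_congr rfl
        intro a _
        exact combo (by ring) (fun b _ => by ring)
    _ = (∑ a ∈ Finset.range (r + 1),
          ((p ^ m / (p ^ m + (1 - p) ^ m)) ^ 2 + (1 - p ^ m / (p ^ m + (1 - p) ^ m)) ^ 2)
            * (exitPMF p m a * exitPMF p m (r - a)))
        + ∑ a ∈ Finset.range (r + 1), ∑ b ∈ Finset.range (r - a + 1),
            (1 - ((p ^ m / (p ^ m + (1 - p) ^ m)) ^ 2
                + (1 - p ^ m / (p ^ m + (1 - p) ^ m)) ^ 2))
              * (exitPMF p m a * exitPMF p m b * exitPMF p (2 * m) (r - a - b)) :=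
        Finset.sum_add_distrib
    _ = _ := by
        congr 1
        · rw [convPow_two, Finset.mul_sum]
        · have swap : ∑ a ∈ Finset.range (r + 1), ∑ b ∈ Finset.range (r - a + 1),
                (1 - ((p ^ m / (p ^ m + (1 - p) ^ m)) ^ 2
                    + (1 - p ^ m / (p ^ m + (1 - p) ^ m)) ^ 2))
                  * (exitPMF p m a * exitPMF p m b * exitPMF p (2 * m) (r - a - b))
              = ∑ a ∈ Finset.range (r + 1), ∑ b ∈ Finset.range (r + 1 - a),
                (1 - ((p ^ m / (p ^ m + (1 - p) ^ m)) ^ 2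
                    + (1 - p ^ m / (p ^ m + (1 - p) ^ m)) ^ 2))
                  * (exitPMF p m a * exitPMF p m b * exitPMF p (2 * m) (r - a - b)) := by
            apply Finset.sum_congr rfl
            intro a ha
            rw [Finset.mem_range] at ha
            rw [show r - a + 1 = r + 1 - a by omega]
          rw [swap]
          rw [tri (fun a b =>
            (1 - ((p ^ m / (p ^ m + (1 - p) ^ m)) ^ 2
                + (1 - p ^ m / (p ^ m + (1 - p) ^ m)) ^ 2))
              * (exitPMF p m a * exitPMF p m b * exitPMF p (2 * m) (r - a - b))) r]
          rw [Finset.mul_sum]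
          apply Finset.sum_congr rfl
          intro t ht
          rw [Finset.mem_range] at ht
          have e1 : ∀ a ∈ Finset.range (t + 1),
              (1 - ((p ^ m / (p ^ m + (1 - p) ^ m)) ^ 2
                  + (1 - p ^ m / (p ^ m + (1 - p) ^ m)) ^ 2))
                * (exitPMF p m a * exitPMF p m (t - a)
                    * exitPMF p (2 * m) (r - a - (t - a)))
              = (1 - ((p ^ m / (p ^ m + (1 - p) ^ m)) ^ 2
                  + (1 - p ^ m / (p ^ m + (1 - p) ^ m)) ^ 2))
                * (exitPMF p m a * exitPMF p m (t - a) * exitPMF p (2 * m) (r - t)) := by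
            intro a ha
            rw [Finset.mem_range] at ha
            rw [show r - a - (t - a) = r - t by omega]
          rw [Finset.sum_congr rfl e1, convPow_two, Finset.sum_mul, Finset.mul_sum]

/-- For even `k = 2m`, `T^{|k|}(p) =_d Σ_{i=1}^N (T_i^{|m|} + T̃_i^{|m|})` where
the summands are i.i.d. copies of `T^{|m|}(p)` independent of `N`, and
`N ~ Geometric((π_m⁺(p))² + (1-π_m⁺(p))²)` with `π_m⁺(p) = p^m/(p^m+(1-p)^m)`. -/
theorem exit_time_decomposition (p : ℝ) (hp : 0 < p) (hp1 : p < 1)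
    (m : ℕ) (hm : 0 < m) :
    ∀ n : ℕ,
      exitPMF p (2 * m) n =
        ∑' j : ℕ,
          (((p ^ m / (p ^ m + (1 - p) ^ m)) ^ 2 + (1 - p ^ m / (p ^ m + (1 - p) ^ m)) ^ 2) *
              (1 - ((p ^ m / (p ^ m + (1 - p) ^ m)) ^ 2 +
                (1 - p ^ m / (p ^ m + (1 - p) ^ m)) ^ 2)) ^ j) *
            convPow (exitPMF p m) (2 * (j + 1)) n := by
  intro n
  have hf0 : exitPMF p m 0 = 0 := by
    rw [exitPMF_def]
    apply Finset.sum_eq_zero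
    intro x _
    rw [if_neg]
    rintro ⟨h1, -⟩
    rw [walkPos_zero, abs_zero] at h1
    have : m = 0 := by exact_mod_cast h1.symm
    omega
  have geom := geom_solve (exitPMF p m) (exitPMF p (2 * m))
    ((p ^ m / (p ^ m + (1 - p) ^ m)) ^ 2 + (1 - p ^ m / (p ^ m + (1 - p) ^ m)) ^ 2)
    hf0 (g_rec p hp hp1 m hm) n
  rw [tsum_eq_sum (s := Finset.range (n + 1)) (fun j hj => by
    rw [Finset.mem_range] at hj
    rw [convPow_eq_zero hf0 (2 * (j + 1)) n (by omega), mul_zero])]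
  unfold Rgeom at geom
  exact geom
end
end
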